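/- With w₁, w₂, w₃ as in the elliptic parametrization (w₁ = ρ/sn, w₂ = ρ dn/sn, w₃ = ρ cn/sn, modulus κ), for any cyclic permutation (j,k,l) of (1,2,3) the identity w_l(u) w_l(u−u₀) w_j(u₀) − w_j(u) w_j(u−u₀) w_l(u₀) = w_k(u₀)(w_l²(u₀) − w_j²(u₀)) holds (at points where all functions are defined). -/

import Mathlib

private lemma const_of_hasDerivAt_zero {f : ℝ → ℝ} (h : ∀ x, HasDerivAt f 0 x)
    (x y : ℝ) : f x = f y :=
  is_const_of_deriv_eq_zero (fun z => (h z).differentiableAt) (fun z => (h z).deriv) x y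

/-- The identity
`w_l(u) w_l(u−u₀) w_j(u₀) − w_j(u) w_j(u−u₀) w_l(u₀) = w_k(u₀)(w_l(u₀)² − w_j(u₀)²)`
for `w₁ = ρ/sn`, `w₂ = ρ dn/sn`, `w₃ = ρ cn/sn` and any cyclic permutation
`(j,k,l)` of `(1,2,3)`. -/
theorem w_identity_2
    (κ : ℝ) (hκ0 : 0 < κ) (hκ1 : κ < 1) (ρ : ℝ) (hρ : ρ ≠ 0)
    (sn cn dn : ℝ → ℝ)
    (hsn' : ∀ u, HasDerivAt sn (cn u * dn u) u)
    (hcn' : ∀ u, HasDerivAt cn (-(sn u * dn u)) u)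
    (hdn' : ∀ u, HasDerivAt dn (-(κ ^ 2 * sn u * cn u)) u)
    (hsn0 : sn 0 = 0) (hcn0 : cn 0 = 1) (hdn0 : dn 0 = 1)
    (w : Fin 3 → ℝ → ℝ)
    (hw1 : ∀ u, w 0 u = ρ / sn u)
    (hw2 : ∀ u, w 1 u = ρ * dn u / sn u)
    (hw3 : ∀ u, w 2 u = ρ * cn u / sn u)
    (u u₀ : ℝ) (h1 : sn u ≠ 0) (h2 : sn (u - u₀) ≠ 0) (h3 : sn u₀ ≠ 0) :
    ∀ j k l : Fin 3,
      ((j, k, l) = (0, 1, 2) ∨ (j, k, l) = (1, 2, 0) ∨ (j, k, l) = (2, 0, 1)) →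
      w l u * w l (u - u₀) * w j u₀ - w j u * w j (u - u₀) * w l u₀ =
        w k u₀ * (w l u₀ ^ 2 - w j u₀ ^ 2) := by
  -- Pythagorean identities
  have pyth1 : ∀ x, cn x ^ 2 + sn x ^ 2 = 1 := by
    intro x
    have h := const_of_hasDerivAt_zero (f := fun t => cn t ^ 2 + sn t ^ 2)
      (fun t => by
        have h' := ((hcn' t).pow 2).add ((hsn' t).pow 2)
        refine h'.congr_deriv (Eq.symm ?_)
        ring) x 0
    simpa [hcn0, hsn0] using h
  have pyth2 : ∀ x, dn x ^ 2 + κ ^ 2 * sn x ^ 2 = 1 := by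
    intro x
    have h := const_of_hasDerivAt_zero (f := fun t => dn t ^ 2 + κ ^ 2 * sn t ^ 2)
      (fun t => by
        have h' := ((hdn' t).pow 2).add (((hsn' t).pow 2).const_mul (κ ^ 2))
        refine h'.congr_deriv (Eq.symm ?_)
        ring) x 0
    simpa [hdn0, hsn0] using h
  have snsq : ∀ x, sn x ^ 2 ≤ 1 := fun x => by nlinarith [pyth1 x, sq_nonneg (cn x)]
  -- the common denominator is positive
  have hΔ : ∀ x : ℝ, 0 < 1 - κ ^ 2 * sn x ^ 2 * sn (x - u₀) ^ 2 := by
    intro x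
    nlinarith [snsq x, snsq (x - u₀), sq_nonneg (sn x), sq_nonneg (sn (x - u₀)),
      sq_nonneg κ, sq_nonneg (κ * sn x), sq_nonneg (κ * sn x * sn (x - u₀))]
  -- shifted derivatives
  have hs2 : ∀ x : ℝ, HasDerivAt (fun t => sn (t - u₀)) (cn (x - u₀) * dn (x - u₀)) x :=
    fun x => by
      have h := (hsn' (x - u₀)).comp x ((hasDerivAt_id x).sub_const u₀)
      simp at h
      exact h
  have hc2 : ∀ x : ℝ, HasDerivAt (fun t => cn (t - u₀)) (-(sn (x - u₀) * dn (x - u₀))) x :=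
    fun x => by
      have h := (hcn' (x - u₀)).comp x ((hasDerivAt_id x).sub_const u₀)
      simp at h
      exact h
  have hd2 : ∀ x : ℝ, HasDerivAt (fun t => dn (t - u₀)) (-(κ ^ 2 * sn (x - u₀) * cn (x - u₀))) x :=
    fun x => by
      have h := (hdn' (x - u₀)).comp x ((hasDerivAt_id x).sub_const u₀)
      simp at h
      exact h
  have hΔ' : ∀ x : ℝ, HasDerivAt (fun t => 1 - κ ^ 2 * sn t ^ 2 * sn (t - u₀) ^ 2)
      (-(κ ^ 2 * (2 * sn x ^ 1 * (cn x * dn x)) * sn (x - u₀) ^ 2 +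
         κ ^ 2 * sn x ^ 2 * (2 * sn (x - u₀) ^ 1 * (cn (x - u₀) * dn (x - u₀))))) x := by
    intro x
    exact ((((hsn' x).pow 2).const_mul (κ ^ 2)).mul ((hs2 x).pow 2)).const_sub 1
  -- addition formula for cn, as a constant quotient
  have hC : cn u₀ = (cn u * cn (u - u₀) + sn u * sn (u - u₀) * dn u * dn (u - u₀)) /
      (1 - κ ^ 2 * sn u ^ 2 * sn (u - u₀) ^ 2) := by
    have hnum : ∀ x : ℝ, HasDerivAt
        (fun t => cn t * cn (t - u₀) + sn t * sn (t - u₀) * dn t * dn (t - u₀))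
        ((-(sn x * dn x)) * cn (x - u₀) + cn x * (-(sn (x - u₀) * dn (x - u₀))) +
         ((((cn x * dn x) * sn (x - u₀) + sn x * (cn (x - u₀) * dn (x - u₀))) * dn x +
            sn x * sn (x - u₀) * (-(κ ^ 2 * sn x * cn x))) * dn (x - u₀) +
          sn x * sn (x - u₀) * dn x * (-(κ ^ 2 * sn (x - u₀) * cn (x - u₀))))) x := by
      intro x
      exact ((hcn' x).mul (hc2 x)).add
        (((((hsn' x).mul (hs2 x)).mul (hdn' x)).mul (hd2 x)))
    have hconst := const_of_hasDerivAt_zero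
      (f := fun t => (cn t * cn (t - u₀) + sn t * sn (t - u₀) * dn t * dn (t - u₀)) /
        (1 - κ ^ 2 * sn t ^ 2 * sn (t - u₀) ^ 2))
      (fun x => by
        have h := (hnum x).div (hΔ' x) (ne_of_gt (hΔ x))
        refine h.congr_deriv (Eq.symm ?_)
        rw [eq_comm, div_eq_zero_iff]
        left
        linear_combination
          (2 * sn x * dn x * sn (x - u₀) ^ 2 * cn (x - u₀) * κ ^ 2) * pyth1 x
          + (cn x * sn (x - u₀) * dn (x - u₀) +
              sn x ^ 2 * cn x * sn (x - u₀) ^ 3 * dn (x - u₀) * κ ^ 2) * pyth2 x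
          + (2 * sn x ^ 2 * cn x * sn (x - u₀) * dn (x - u₀) * κ ^ 2) * pyth1 (x - u₀)
          + (sn x * dn x * cn (x - u₀) +
              sn x ^ 3 * dn x * sn (x - u₀) ^ 2 * cn (x - u₀) * κ ^ 2) * pyth2 (x - u₀)) u₀ u
    simpa [sub_self, hsn0, hcn0, hdn0] using hconst
  -- addition formula for dn
  have hD : dn u₀ = (dn u * dn (u - u₀) + κ ^ 2 * sn u * sn (u - u₀) * cn u * cn (u - u₀)) /
      (1 - κ ^ 2 * sn u ^ 2 * sn (u - u₀) ^ 2) := by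
    have hnum : ∀ x : ℝ, HasDerivAt
        (fun t => dn t * dn (t - u₀) + κ ^ 2 * sn t * sn (t - u₀) * cn t * cn (t - u₀))
        ((-(κ ^ 2 * sn x * cn x)) * dn (x - u₀) + dn x * (-(κ ^ 2 * sn (x - u₀) * cn (x - u₀))) +
         (((κ ^ 2 * (cn x * dn x) * sn (x - u₀) +
              κ ^ 2 * sn x * (cn (x - u₀) * dn (x - u₀))) * cn x +
            κ ^ 2 * sn x * sn (x - u₀) * (-(sn x * dn x))) * cn (x - u₀) +
          κ ^ 2 * sn x * sn (x - u₀) * cn x * (-(sn (x - u₀) * dn (x - u₀))))) x := by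
      intro x
      exact ((hdn' x).mul (hd2 x)).add
        ((((((hsn' x).const_mul (κ ^ 2)).mul (hs2 x)).mul (hcn' x)).mul (hc2 x)))
    have hconst := const_of_hasDerivAt_zero
      (f := fun t => (dn t * dn (t - u₀) + κ ^ 2 * sn t * sn (t - u₀) * cn t * cn (t - u₀)) /
        (1 - κ ^ 2 * sn t ^ 2 * sn (t - u₀) ^ 2))
      (fun x => by
        have h := (hnum x).div (hΔ' x) (ne_of_gt (hΔ x))
        refine h.congr_deriv (Eq.symm ?_)
        rw [eq_comm, div_eq_zero_iff]
        left
        linear_combination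
          (dn x * sn (x - u₀) * cn (x - u₀) * κ ^ 2 +
            sn x ^ 2 * dn x * sn (x - u₀) ^ 3 * cn (x - u₀) * κ ^ 4) * pyth1 x
          + (2 * sn x * cn x * sn (x - u₀) ^ 2 * dn (x - u₀) * κ ^ 2) * pyth2 x
          + (sn x * cn x * dn (x - u₀) * κ ^ 2 +
              sn x ^ 3 * cn x * sn (x - u₀) ^ 2 * dn (x - u₀) * κ ^ 4) * pyth1 (x - u₀)
          + (2 * sn x ^ 2 * dn x * sn (x - u₀) * cn (x - u₀) * κ ^ 2) * pyth2 (x - u₀)) u₀ u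
    simpa [sub_self, hsn0, hcn0, hdn0] using hconst
  -- multiplied forms
  have hΔne : (1 - κ ^ 2 * sn u ^ 2 * sn (u - u₀) ^ 2) ≠ 0 := ne_of_gt (hΔ u)
  have hC' : cn u₀ * (1 - κ ^ 2 * sn u ^ 2 * sn (u - u₀) ^ 2) =
      cn u * cn (u - u₀) + sn u * sn (u - u₀) * dn u * dn (u - u₀) := by
    rw [hC, div_mul_cancel₀ _ hΔne]
  have hD' : dn u₀ * (1 - κ ^ 2 * sn u ^ 2 * sn (u - u₀) ^ 2) =
      dn u * dn (u - u₀) + κ ^ 2 * sn u * sn (u - u₀) * cn u * cn (u - u₀) := by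
    rw [hD, div_mul_cancel₀ _ hΔne]
  -- the three clean identities
  have key1 : cn u * cn (u - u₀) - cn u₀ = -(dn u₀ * (sn u * sn (u - u₀))) := by
    apply mul_right_cancel₀ hΔne
    linear_combination (-1 : ℝ) * hC' + (sn u * sn (u - u₀)) * hD'
  have key2 : dn u₀ - dn u * dn (u - u₀) = κ ^ 2 * cn u₀ * (sn u * sn (u - u₀)) := by
    apply mul_right_cancel₀ hΔne
    linear_combination hD' - κ ^ 2 * (sn u * sn (u - u₀)) * hC'
  have key3 : dn u * dn (u - u₀) * cn u₀ - cn u * cn (u - u₀) * dn u₀ =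
      (1 - κ ^ 2) * (sn u * sn (u - u₀)) := by
    apply mul_right_cancel₀ hΔne
    linear_combination (dn u * dn (u - u₀)) * hC' - (cn u * cn (u - u₀)) * hD'
      + (sn u * sn (u - u₀)) * (dn (u - u₀) ^ 2) * pyth2 u
      + (sn u * sn (u - u₀)) * (1 - κ ^ 2 * sn u ^ 2) * pyth2 (u - u₀)
      - κ ^ 2 * (sn u * sn (u - u₀)) * (cn (u - u₀) ^ 2) * pyth1 u
      - κ ^ 2 * (sn u * sn (u - u₀)) * (1 - sn u ^ 2) * pyth1 (u - u₀)
  -- finish by cases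
  intro j k l h
  rcases h with h | h | h <;>
    · simp only [Prod.mk.injEq] at h
      obtain ⟨rfl, rfl, rfl⟩ := h
      simp only [hw1, hw2, hw3]
      field_simp
      first
      | linear_combination (sn u₀ ^ 2) * key1 -
          (dn u₀ * (sn u * sn (u - u₀))) * pyth1 u₀
      | linear_combination (sn u₀ ^ 2) * key2 +
          (cn u₀ * (sn u * sn (u - u₀))) * pyth2 u₀
      | linear_combination (sn u₀ ^ 2) * key3 -
          ((sn u * sn (u - u₀))) * pyth2 u₀ +
          ((sn u * sn (u - u₀))) * pyth1 u₀
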